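/- arXiv:1602.03236 — 8 statements merged into one kernel-verified Lean document; each statement's English description precedes it below -/
import Mathlib

section
/- Let n ≥ 3 and let A ∈ T_n have block form A = [[0, a], [0, A₁]] where A₁ ∈ T_{n-1} is invertible and a is a 1×(n-1) row vector. Then the set of upper triangular matrices C orthogonal to A equals { C : C = [[c₀, -c₀·a·A₁⁻¹], [0, 0]] for some c₀ ∈ F }, i.e., every matrix orthogonal to A is determined by the scalar c₀ in its (1,1) entry, with first row (c₀, -c₀·a·A₁⁻¹) and all other rows zero. -/
open Matrix

/-- Lemma on bad-1 matrices: if `A` is upper triangular with block form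
`[[0, a], [0, A₁]]` (rows/columns split as `1 + n`), `A₁` invertible, then the
upper triangular matrices orthogonal to `A` are exactly those whose only
nonzero row is the first, of the form `(c₀, -c₀ ⬝ a ⬝ A₁⁻¹)`. -/
theorem stmt_1 {F : Type*} [Field F] {n : ℕ} (hn : 3 ≤ n + 1)
    (A : Matrix (Fin (n + 1)) (Fin (n + 1)) F)
    (hA : A.BlockTriangular id)
    (h00 : A 0 0 = 0)
    (hA1 : IsUnit (A.submatrix Fin.succ Fin.succ).det) :
    ∀ C : Matrix (Fin (n + 1)) (Fin (n + 1)) F, C.BlockTriangular id →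
      ((A * C = 0 ∧ C * A = 0) ↔
        ∃ c₀ : F,
          C 0 0 = c₀ ∧
          (∀ j : Fin n, C 0 j.succ =
            -c₀ * ((fun j' : Fin n => A 0 j'.succ) ᵥ*
                    (A.submatrix Fin.succ Fin.succ)⁻¹) j) ∧
          (∀ i : Fin n, ∀ k : Fin (n + 1), C i.succ k = 0)) := by
  intro C hC
  set A₁ := A.submatrix Fin.succ Fin.succ with hA₁def
  have hAlow : ∀ i : Fin n, A i.succ 0 = 0 := fun i => hA (Fin.succ_pos i)
  have hinv1 : A₁⁻¹ * A₁ = 1 := Matrix.nonsing_inv_mul _ hA1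
  have hinv2 : A₁ * A₁⁻¹ = 1 := Matrix.mul_nonsing_inv _ hA1
  constructor
  · rintro ⟨hAC, hCA⟩
    have hClow : ∀ i : Fin n, C i.succ 0 = 0 := fun i => hC (Fin.succ_pos i)
    -- the lower-right block of C is killed
    have h1 : A₁ * C.submatrix Fin.succ Fin.succ = 0 := by
      ext i k
      have h := congrFun (congrFun hAC i.succ) k.succ
      rw [Matrix.mul_apply, Fin.sum_univ_succ] at h
      simp only [hAlow, zero_mul, zero_add, Matrix.zero_apply] at h
      simpa [Matrix.mul_apply, hA₁def, Matrix.submatrix_apply] using h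
    have hC₁ : C.submatrix Fin.succ Fin.succ = 0 := by
      calc C.submatrix Fin.succ Fin.succ
          = (A₁⁻¹ * A₁) * C.submatrix Fin.succ Fin.succ := by rw [hinv1, one_mul]
        _ = A₁⁻¹ * (A₁ * C.submatrix Fin.succ Fin.succ) := by rw [mul_assoc]
        _ = 0 := by rw [h1, mul_zero]
    have hzero : ∀ i : Fin n, ∀ k : Fin (n + 1), C i.succ k = 0 := by
      intro i k
      induction k using Fin.cases with
      | zero => exact hClow i
      | succ k => exact congrFun (congrFun hC₁ i) k
    refine ⟨C 0 0, rfl, ?_, hzero⟩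
    -- compute the first row from C * A = 0
    have hvec : (fun j : Fin n => C 0 j.succ) ᵥ* A₁ =
        fun k => -(C 0 0) * A 0 k.succ := by
      funext k
      have h := congrFun (congrFun hCA 0) k.succ
      rw [Matrix.mul_apply, Fin.sum_univ_succ] at h
      simp only [Matrix.zero_apply] at h
      simp only [Matrix.vecMul, dotProduct, hA₁def, Matrix.submatrix_apply]
      linear_combination h
    have hc : (fun j : Fin n => C 0 j.succ) =
        fun j => -(C 0 0) * ((fun j' : Fin n => A 0 j'.succ) ᵥ* A₁⁻¹) j := by
      have := congrArg (fun v => v ᵥ* A₁⁻¹) hvec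
      simp only [Matrix.vecMul_vecMul, hinv2, Matrix.vecMul_one] at this
      rw [this]
      funext j
      simp only [Matrix.vecMul, dotProduct]
      rw [Finset.mul_sum]
      congr 1
      funext i
      ring
    intro j
    exact congrFun hc j
  · rintro ⟨c₀, hc0, hcrow, hzero⟩
    constructor
    · ext i k
      rw [Matrix.mul_apply, Fin.sum_univ_succ]
      have hAi0 : A i 0 = 0 := by
        induction i using Fin.cases with
        | zero => exact h00
        | succ i => exact hAlow i
      simp [hAi0, hzero]
    · ext i k
      induction i using Fin.cases with
      | succ i =>
        rw [Matrix.mul_apply]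
        simp [hzero]
      | zero =>
        rw [Matrix.mul_apply, Fin.sum_univ_succ]
        induction k using Fin.cases with
        | zero => simp [h00, hAlow]
        | succ k =>
          have hkey : ((fun j' : Fin n => A 0 j'.succ) ᵥ* A₁⁻¹) ᵥ* A₁ =
              fun j' : Fin n => A 0 j'.succ := by
            rw [Matrix.vecMul_vecMul, hinv1, Matrix.vecMul_one]
          have hk := congrFun hkey k
          simp only [Matrix.vecMul, dotProduct] at hk
          have hsum : ∑ j : Fin n, C 0 j.succ * A j.succ k.succ =
              -c₀ * A 0 k.succ := by
            calc ∑ j : Fin n, C 0 j.succ * A j.succ k.succ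
                = ∑ j : Fin n, (-c₀ * ((fun j' : Fin n => A 0 j'.succ) ᵥ* A₁⁻¹) j)
                    * A₁ j k := by
                  refine Finset.sum_congr rfl fun j _ => ?_
                  rw [hcrow j]
                  rfl
              _ = -c₀ * ∑ j : Fin n,
                    ((fun j' : Fin n => A 0 j'.succ) ᵥ* A₁⁻¹) j * A₁ j k := by
                  rw [Finset.mul_sum]; congr 1; funext j; ring
              _ = -c₀ * A 0 k.succ := by
                  simp only [Matrix.vecMul, dotProduct]
                  rw [hk]
          rw [hsum, hc0]
          simp only [Matrix.zero_apply]
          ring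
end

section
/- Let n ≥ 3 and let B ∈ T_n have block form B = [[B₁, b], [0, 0]] where B₁ ∈ T_{n-1} is invertible and b is an (n-1)×1 column vector. Then the set of upper triangular matrices C orthogonal to B equals { C : C = [[0, -B₁⁻¹·b·c₀], [0, c₀]] for some c₀ ∈ F }, i.e., every matrix orthogonal to B has all entries zero except its last column, which is (-B₁⁻¹ b c₀, c₀) for some scalar c₀. -/
open Matrix

/-- Lemma on bad-2 matrices: if `B` is upper triangular with block form
`[[B₁, b], [0, 0]]` (rows/columns split as `n + 1`), `B₁` invertible, then the
upper triangular matrices orthogonal to `B` are exactly those whose only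
nonzero column is the last, of the form `(-B₁⁻¹ ⬝ b ⬝ c₀, c₀)`. -/
theorem stmt_2 {F : Type*} [Field F] {n : ℕ} (hn : 3 ≤ n + 1)
    (B : Matrix (Fin (n + 1)) (Fin (n + 1)) F)
    (hB : B.BlockTriangular id)
    (hnn : B (Fin.last n) (Fin.last n) = 0)
    (hB1 : IsUnit (B.submatrix Fin.castSucc Fin.castSucc).det) :
    ∀ C : Matrix (Fin (n + 1)) (Fin (n + 1)) F, C.BlockTriangular id →
      ((B * C = 0 ∧ C * B = 0) ↔
        ∃ c₀ : F,
          C (Fin.last n) (Fin.last n) = c₀ ∧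
          (∀ i : Fin n, C i.castSucc (Fin.last n) =
            -((B.submatrix Fin.castSucc Fin.castSucc)⁻¹ *ᵥ
                (fun i' : Fin n => B i'.castSucc (Fin.last n))) i * c₀) ∧
          (∀ i : Fin (n + 1), ∀ j : Fin n, C i j.castSucc = 0)) := by
  intro C hC
  set B₁ := B.submatrix Fin.castSucc Fin.castSucc with hB₁def
  set b : Fin n → F := fun i' : Fin n => B i'.castSucc (Fin.last n) with hbdef
  have hinv : B₁⁻¹ * B₁ = 1 := Matrix.nonsing_inv_mul _ hB1
  have hinv' : B₁ * B₁⁻¹ = 1 := Matrix.mul_nonsing_inv _ hB1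
  have hBlast : ∀ k, B (Fin.last n) k = 0 := by
    intro k
    rcases lt_or_eq_of_le (Fin.le_last k) with hk | hk
    · exact hB hk
    · rw [hk]; exact hnn
  have hClast : ∀ j : Fin n, C (Fin.last n) j.castSucc = 0 := by
    intro j
    exact hC (by simpa using j.castSucc_lt_last)
  constructor
  · rintro ⟨hBC, hCB⟩
    have hcol : ∀ i : Fin (n + 1), ∀ j : Fin n, C i j.castSucc = 0 := by
      intro i j
      set v : Fin n → F := fun k => C k.castSucc j.castSucc with hvdef
      have hv : B₁ *ᵥ v = 0 := by
        funext i'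
        have h0 : (B * C) i'.castSucc j.castSucc = 0 := by rw [hBC]; rfl
        rw [Matrix.mul_apply, Fin.sum_univ_castSucc] at h0
        simp only [hClast j, mul_zero, add_zero] at h0
        simpa [Matrix.mulVec, dotProduct, hvdef, hB₁def] using h0
      have hv0 : v = 0 := by
        have := congrArg (fun w => B₁⁻¹ *ᵥ w) hv
        simpa [Matrix.mulVec_mulVec, hinv] using this
      induction i using Fin.lastCases with
      | last => exact hClast j
      | cast i' => exact congrFun hv0 i'
    refine ⟨C (Fin.last n) (Fin.last n), rfl, ?_, hcol⟩
    set c₀ := C (Fin.last n) (Fin.last n) with hc₀def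
    set w : Fin n → F := fun k => C k.castSucc (Fin.last n) with hwdef
    have hw : B₁ *ᵥ w = fun i' => -(b i' * c₀) := by
      funext i'
      have h0 : (B * C) i'.castSucc (Fin.last n) = 0 := by rw [hBC]; rfl
      rw [Matrix.mul_apply, Fin.sum_univ_castSucc] at h0
      have : (B₁ *ᵥ w) i' + b i' * c₀ = 0 := by
        simpa [Matrix.mulVec, dotProduct, hwdef, hB₁def, hbdef, hc₀def] using h0
      linear_combination this
    intro i
    have hw' : w = fun i' => -(B₁⁻¹ *ᵥ b) i' * c₀ := by
      have h1 := congrArg (fun u => B₁⁻¹ *ᵥ u) hw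
      simp only [Matrix.mulVec_mulVec, hinv, Matrix.one_mulVec] at h1
      rw [h1]
      funext k
      simp [Matrix.mulVec, dotProduct, Finset.sum_neg_distrib, Finset.sum_mul, mul_assoc]
    exact congrFun hw' i
  · rintro ⟨c₀, hc₀, hlastcol, hcol⟩
    constructor
    · ext i j
      induction j using Fin.lastCases with
      | last =>
        induction i using Fin.lastCases with
        | last => simp [Matrix.mul_apply, hBlast]
        | cast i' =>
          rw [Matrix.mul_apply, Fin.sum_univ_castSucc]
          have key : (B₁ *ᵥ (B₁⁻¹ *ᵥ b)) i' = b i' := by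
            rw [Matrix.mulVec_mulVec, hinv', Matrix.one_mulVec]
          simp only [hlastcol, hc₀, Matrix.zero_apply]
          rw [Matrix.mulVec, dotProduct] at key
          have hs : ∑ k : Fin n, B i'.castSucc k.castSucc *
              (-(B₁⁻¹ *ᵥ b) k * c₀) = -(b i' * c₀) := by
            have h2 := congrArg (· * c₀) key
            simp only [Finset.sum_mul] at h2
            rw [← h2]
            rw [← Finset.sum_neg_distrib]
            refine Finset.sum_congr rfl fun k _ => ?_
            simp only [hB₁def, Matrix.submatrix_apply]
            ring
          rw [hs]
          simp [hbdef]
      | cast j' => simp [Matrix.mul_apply, hcol]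
    · ext i j
      rw [Matrix.mul_apply, Fin.sum_univ_castSucc]
      simp [hcol, hBlast]
end

section
/- Let A ∈ T_n be a nonzero singular upper triangular matrix over a field F with a zero diagonal entry at position (i,i). Then there exists a rank-one upper triangular matrix R ∈ T_n with AR = RA = 0 (in particular, A and R are at distance at most 1 in the orthogonality graph). Moreover R can be chosen of the form R = x·fᵗ where x ∈ F^n is supported on the first i coordinates with A x = 0, and f ∈ F^n is supported on coordinates i through n with Aᵗ f = 0. -/
open Matrix

/-- For a nonzero singular upper triangular matrix `A` with zero `(i,i)` diagonal
entry there is a rank-one upper triangular matrix `R = x ⬝ fᵗ` orthogonal to `A`,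
with `x` supported on the coordinates `≤ i` and `f` supported on coordinates `≥ i`. -/
theorem stmt_4 {F : Type*} [Field F] {n : ℕ}
    (A : Matrix (Fin n) (Fin n) F)
    (hA : A.BlockTriangular id) (hA0 : A ≠ 0) (hsing : A.det = 0)
    (i : Fin n) (hii : A i i = 0) :
    ∃ x f : Fin n → F, x ≠ 0 ∧ f ≠ 0 ∧
      (∀ j : Fin n, i < j → x j = 0) ∧
      (∀ j : Fin n, j < i → f j = 0) ∧
      A *ᵥ x = 0 ∧ Aᵀ *ᵥ f = 0 ∧
      (vecMulVec x f).BlockTriangular id ∧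
      (vecMulVec x f).rank = 1 ∧
      A * vecMulVec x f = 0 ∧ vecMulVec x f * A = 0 := by
  classical
  have hin : (i : ℕ) < n := i.isLt
  -- leading block
  set m1 : ℕ := (i : ℕ) + 1 with hm1
  have hm1n : m1 ≤ n := hin
  set e1 : Fin m1 → Fin n := Fin.castLE hm1n with he1
  have he1inj : Function.Injective e1 := Fin.castLE_injective hm1n
  set B : Matrix (Fin m1) (Fin m1) F := A.submatrix e1 e1 with hB
  have hBtri : B.BlockTriangular id := by
    intro a b hab
    exact hA (show (id (e1 b) : Fin n) < id (e1 a) from hab)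
  have hdetB : B.det = 0 := by
    rw [Matrix.det_of_upperTriangular hBtri]
    refine Finset.prod_eq_zero (Finset.mem_univ (⟨(i : ℕ), Nat.lt_succ_self _⟩ : Fin m1)) ?_
    have : e1 ⟨(i : ℕ), Nat.lt_succ_self _⟩ = i := by
      apply Fin.ext; simp [he1]
    simp [hB, this, hii]
  obtain ⟨v, hv0, hBv⟩ := (Matrix.exists_mulVec_eq_zero_iff).mpr hdetB
  set x : Fin n → F := fun j => if h : (j : ℕ) < m1 then v ⟨j, h⟩ else 0 with hx
  -- trailing block
  set m2 : ℕ := n - i with hm2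
  have hm2pos : 0 < m2 := by omega
  set e2 : Fin m2 → Fin n := fun k => ⟨(i : ℕ) + k, by omega⟩ with he2
  have he2inj : Function.Injective e2 := by
    intro a b hab
    apply Fin.ext
    have := congrArg (fun z : Fin n => (z : ℕ)) hab
    simp [he2] at this
    omega
  set C : Matrix (Fin m2) (Fin m2) F := A.submatrix e2 e2 with hC
  have hCtri : C.BlockTriangular id := by
    intro a b hab
    refine hA (show (id (e2 b) : Fin n) < id (e2 a) from ?_)
    simp only [id, he2, Fin.mk_lt_mk]
    have : (b : ℕ) < a := hab
    omega
  have hdetC : Cᵀ.det = 0 := by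
    rw [Matrix.det_transpose, Matrix.det_of_upperTriangular hCtri]
    refine Finset.prod_eq_zero (Finset.mem_univ (⟨0, hm2pos⟩ : Fin m2)) ?_
    have : e2 ⟨0, hm2pos⟩ = i := by apply Fin.ext; simp [he2]
    simp [hC, this, hii]
  obtain ⟨w, hw0, hCw⟩ := (Matrix.exists_mulVec_eq_zero_iff).mpr hdetC
  set f : Fin n → F := fun j =>
    if h : (i : ℕ) ≤ j then w ⟨(j : ℕ) - i, by omega⟩ else 0 with hf
  have hxval : ∀ a : Fin m1, x (e1 a) = v a := by
    intro a
    have hlt : ((e1 a : Fin n) : ℕ) < m1 := a.isLt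
    show (if h : ((e1 a : Fin n) : ℕ) < m1 then v ⟨((e1 a : Fin n) : ℕ), h⟩ else 0) = v a
    rw [dif_pos hlt]
    exact congrArg v (Fin.ext rfl)
  have hxzero : ∀ k : Fin n, ¬ (k : ℕ) < m1 → x k = 0 := by
    intro k h
    exact dif_neg h
  have hfval : ∀ a : Fin m2, f (e2 a) = w a := by
    intro a
    have hle : (i : ℕ) ≤ ((e2 a : Fin n) : ℕ) := by simp [he2]
    show (if h : (i : ℕ) ≤ ((e2 a : Fin n) : ℕ)
        then w ⟨((e2 a : Fin n) : ℕ) - i, by omega⟩ else 0) = w a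
    rw [dif_pos hle]
    congr 1
    apply Fin.ext
    show ((e2 a : Fin n) : ℕ) - i = (a : ℕ)
    have : ((e2 a : Fin n) : ℕ) = i + a := rfl
    omega
  have hfzero : ∀ k : Fin n, ¬ (i : ℕ) ≤ (k : ℕ) → f k = 0 := by
    intro k h
    exact dif_neg h
  -- key reindexing lemmas
  have key1 : ∀ g : Fin n → F, ∑ k, g k * x k = ∑ a : Fin m1, g (e1 a) * v a := by
    intro g
    have hsub : (Finset.univ.map ⟨e1, he1inj⟩) ⊆ Finset.univ := Finset.subset_univ _
    rw [← Finset.sum_subset hsub ?_, Finset.sum_map]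
    · refine Finset.sum_congr rfl fun a _ => ?_
      show g (e1 a) * x (e1 a) = g (e1 a) * v a
      rw [hxval a]
    · intro k _ hk
      have : ¬ (k : ℕ) < m1 := by
        intro hlt
        exact hk (Finset.mem_map.mpr ⟨⟨(k : ℕ), hlt⟩, Finset.mem_univ _, Fin.ext rfl⟩)
      rw [hxzero k this, mul_zero]
  have key2 : ∀ g : Fin n → F, ∑ k, g k * f k = ∑ a : Fin m2, g (e2 a) * w a := by
    intro g
    have hsub : (Finset.univ.map ⟨e2, he2inj⟩) ⊆ Finset.univ := Finset.subset_univ _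
    rw [← Finset.sum_subset hsub ?_, Finset.sum_map]
    · refine Finset.sum_congr rfl fun a _ => ?_
      show g (e2 a) * f (e2 a) = g (e2 a) * w a
      rw [hfval a]
    · intro k _ hk
      have : ¬ (i : ℕ) ≤ (k : ℕ) := by
        intro hle
        refine hk (Finset.mem_map.mpr ⟨⟨(k : ℕ) - i, by omega⟩, Finset.mem_univ _, ?_⟩)
        apply Fin.ext
        show (i : ℕ) + ((k : ℕ) - i) = (k : ℕ)
        omega
      rw [hfzero k this, mul_zero]
  -- A *ᵥ x = 0
  have hAx : A *ᵥ x = 0 := by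
    funext j
    have : (A *ᵥ x) j = ∑ a : Fin m1, A j (e1 a) * v a := key1 (A j)
    rw [this]
    by_cases hj : (j : ℕ) < m1
    · have hjB : (B *ᵥ v) ⟨(j : ℕ), hj⟩ = 0 := by rw [hBv]; rfl
      have heq : ∑ a : Fin m1, A j (e1 a) * v a = (B *ᵥ v) ⟨(j : ℕ), hj⟩ := by
        refine Finset.sum_congr rfl fun a _ => ?_
        congr 1
      rw [heq, hjB]; rfl
    · have hz : ∀ a : Fin m1, A j (e1 a) * v a = 0 := by
        intro a
        have hz2 : A j (e1 a) = 0 := by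
          refine hA (show (id (e1 a) : Fin n) < id j from ?_)
          rw [Fin.lt_def]
          have h1 : ((e1 a : Fin n) : ℕ) = (a : ℕ) := rfl
          have h2 : (a : ℕ) < m1 := a.isLt
          show ((e1 a : Fin n) : ℕ) < (j : ℕ)
          omega
        rw [hz2, zero_mul]
      rw [Finset.sum_congr rfl fun a _ => hz a, Finset.sum_const_zero]; rfl
  -- Aᵀ *ᵥ f = 0
  have hAf : Aᵀ *ᵥ f = 0 := by
    funext j
    have : (Aᵀ *ᵥ f) j = ∑ a : Fin m2, A (e2 a) j * w a := key2 (fun k => A k j)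
    rw [this]
    by_cases hj : (i : ℕ) ≤ j
    · have hjm : (j : ℕ) - i < m2 := by omega
      have hjC : (Cᵀ *ᵥ w) ⟨(j : ℕ) - i, hjm⟩ = 0 := by rw [hCw]; rfl
      have heq : ∑ a : Fin m2, A (e2 a) j * w a = (Cᵀ *ᵥ w) ⟨(j : ℕ) - i, hjm⟩ := by
        refine Finset.sum_congr rfl fun a _ => ?_
        congr 1
        show A (e2 a) j = A (e2 a) (e2 ⟨(j : ℕ) - i, hjm⟩)
        congr 1
        apply Fin.ext
        show (j : ℕ) = (i : ℕ) + ((j : ℕ) - i)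
        omega
      rw [heq, hjC]; rfl
    · have hz : ∀ a : Fin m2, A (e2 a) j * w a = 0 := by
        intro a
        have hz2 : A (e2 a) j = 0 := by
          refine hA (show (id j : Fin n) < id (e2 a) from ?_)
          rw [Fin.lt_def]
          show (j : ℕ) < ((e2 a : Fin n) : ℕ)
          have h1 : ((e2 a : Fin n) : ℕ) = (i : ℕ) + a := rfl
          omega
        rw [hz2, zero_mul]
      rw [Finset.sum_congr rfl fun a _ => hz a, Finset.sum_const_zero]; rfl
  -- nonvanishing
  obtain ⟨a0, ha0⟩ := Function.ne_iff.mp hv0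
  obtain ⟨b0, hb0⟩ := Function.ne_iff.mp hw0
  have hxne : x ≠ 0 := by
    intro h
    apply ha0
    have h2 := hxval a0
    rw [h] at h2
    exact h2.symm
  have hfne : f ≠ 0 := by
    intro h
    apply hb0
    have h2 := hfval b0
    rw [h] at h2
    exact h2.symm
  have hxsupp : ∀ j : Fin n, i < j → x j = 0 := by
    intro j hj
    refine hxzero j ?_
    have : (i : ℕ) < j := hj
    omega
  have hfsupp : ∀ j : Fin n, j < i → f j = 0 := by
    intro j hj
    refine hfzero j ?_
    have : (j : ℕ) < i := hj
    omega
  refine ⟨x, f, hxne, hfne, hxsupp, hfsupp, hAx, hAf, ?_, ?_, ?_, ?_⟩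
  · -- block triangular
    intro a b hab
    rw [vecMulVec_apply]
    by_cases ha : i < a
    · rw [hxsupp a ha, zero_mul]
    · have hb : b < i := lt_of_lt_of_le hab (not_lt.mp ha)
      rw [hfsupp b hb, mul_zero]
  · -- rank
    refine le_antisymm ?_ ?_
    · calc (vecMulVec x f).rank = (replicateCol (Fin 1) x * replicateRow (Fin 1) f).rank := by
            rw [vecMulVec_eq (Fin 1)]; rfl
        _ ≤ (replicateCol (Fin 1) x).rank := rank_mul_le_left _ _
        _ ≤ Fintype.card (Fin 1) := rank_le_card_width _
        _ = 1 := by simp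
    · rw [Nat.one_le_iff_ne_zero]
      intro h
      obtain ⟨k, hk⟩ := Function.ne_iff.mp hfne
      obtain ⟨l, hl⟩ := Function.ne_iff.mp hxne
      have hMv : (vecMulVec x f) *ᵥ Pi.single k 1 ≠ 0 := by
        intro h0
        have := congrFun h0 l
        simp [mulVec_single, vecMulVec_apply] at this
        rcases this with h | h
        exacts [hl h, hk h]
      apply hMv
      have : LinearMap.range (vecMulVec x f).mulVecLin = ⊥ := by
        rw [Matrix.rank] at h
        exact Submodule.finrank_eq_zero.mp h
      have hmem : (vecMulVec x f).mulVecLin (Pi.single k 1) ∈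
          LinearMap.range (vecMulVec x f).mulVecLin := LinearMap.mem_range_self _ _
      rw [this, Submodule.mem_bot] at hmem
      exact hmem
  · -- A * R = 0
    ext j k
    have : (A * vecMulVec x f) j k = (A *ᵥ x) j * f k := by
      simp only [mul_apply, vecMulVec_apply, mulVec, dotProduct, Finset.sum_mul, mul_assoc]
    rw [this, hAx]
    simp
  · -- R * A = 0
    ext j k
    have : (vecMulVec x f * A) j k = x j * (Aᵀ *ᵥ f) k := by
      simp only [mul_apply, vecMulVec_apply, mulVec, dotProduct, transpose_apply,
        Finset.mul_sum, mul_assoc]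
      exact Finset.sum_congr rfl fun l _ => by ring
    rw [this, hAf]
    simp
end

section
/- Let A ∈ T_n be a nonzero singular upper triangular matrix over a field F with a zero diagonal entry at position (i,i) where 2 ≤ i ≤ n-1. Then there exists a nonzero matrix R ∈ T_n orthogonal to A whose first column and last row are both zero; consequently R is also orthogonal to the matrix unit E_{1n}. -/
open Matrix

private lemma sum_fin_restrict {M : Type*} [AddCommMonoid M] {n m : ℕ} (h : m ≤ n)
    (f : Fin n → M) (hf : ∀ j : Fin n, m ≤ (j : ℕ) → f j = 0) :
    ∑ j : Fin n, f j = ∑ j : Fin m, f (Fin.castLE h j) := by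
  classical
  have hsub : ((Finset.univ : Finset (Fin m)).map (Fin.castLEEmb h)) ⊆
      Finset.univ := Finset.subset_univ _
  have hz : ∀ x ∈ (Finset.univ : Finset (Fin n)),
      x ∉ ((Finset.univ : Finset (Fin m)).map (Fin.castLEEmb h)) → f x = 0 := by
    intro x _ hx
    apply hf
    by_contra hlt
    push_neg at hlt
    exact hx (Finset.mem_map.2 ⟨⟨x, hlt⟩, Finset.mem_univ _, rfl⟩)
  rw [← Finset.sum_subset hsub hz, Finset.sum_map]
  rfl

private lemma sum_fin_ge {M : Type*} [AddCommMonoid M] {n i : ℕ} (h : i ≤ n)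
    (f : Fin n → M) (hf : ∀ j : Fin n, (j : ℕ) < i → f j = 0) :
    ∑ j : Fin n, f j = ∑ t : Fin (n - i), f ⟨i + t, by omega⟩ := by
  classical
  have hinj : Function.Injective (fun t : Fin (n - i) => (⟨i + t, by omega⟩ : Fin n)) := by
    intro a b hab
    have : i + (a : ℕ) = i + b := congrArg Fin.val hab
    exact Fin.ext (by omega)
  set e : Fin (n - i) ↪ Fin n := ⟨_, hinj⟩ with he
  have hz : ∀ x ∈ (Finset.univ : Finset (Fin n)),
      x ∉ ((Finset.univ : Finset (Fin (n - i))).map e) → f x = 0 := by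
    intro x _ hx
    apply hf
    by_contra hlt
    push_neg at hlt
    refine hx (Finset.mem_map.2 ⟨⟨(x : ℕ) - i, by omega⟩, Finset.mem_univ _, ?_⟩)
    exact Fin.ext (by simp [e]; omega)
  rw [← Finset.sum_subset (Finset.subset_univ _) hz, Finset.sum_map]
  rfl

/-- If a nonzero singular upper triangular matrix `A` (with `n ≥ 3`) has a zero
diagonal entry at some position `(i,i)` with `2 ≤ i ≤ n-1` (in 1-based indexing,
i.e. `1 ≤ i ≤ n-2` for `Fin n`), then there is a nonzero matrix `R` orthogonal
to `A` whose first column and last row vanish; consequently `R` is orthogonal to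
the matrix unit `E₁ₙ`. -/
theorem stmt_5 {F : Type*} [Field F] {n : ℕ} (hn : 3 ≤ n)
    (A : Matrix (Fin n) (Fin n) F)
    (hA : A.BlockTriangular id) (hA0 : A ≠ 0) (hsing : A.det = 0)
    (i : Fin n) (hii : A i i = 0) (hi1 : 1 ≤ (i : ℕ)) (hi2 : (i : ℕ) ≤ n - 2) :
    ∃ R : Matrix (Fin n) (Fin n) F, R ≠ 0 ∧ R.BlockTriangular id ∧
      A * R = 0 ∧ R * A = 0 ∧
      (∀ k : Fin n, R k ⟨0, by omega⟩ = 0) ∧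
      (∀ k : Fin n, R ⟨n - 1, by omega⟩ k = 0) ∧
      R * single (⟨0, by omega⟩ : Fin n) (⟨n - 1, by omega⟩ : Fin n) (1 : F) = 0 ∧
      single (⟨0, by omega⟩ : Fin n) (⟨n - 1, by omega⟩ : Fin n) (1 : F) * R = 0 := by
  classical
  have hin : (i : ℕ) < n := i.isLt
  have hm : (i : ℕ) + 1 ≤ n := by omega
  -- leading principal block of size i+1
  set B : Matrix (Fin ((i : ℕ) + 1)) (Fin ((i : ℕ) + 1)) F :=
    A.submatrix (Fin.castLE hm) (Fin.castLE hm) with hB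
  have hBtri : B.BlockTriangular id := by
    intro a b hab
    exact hA (show (Fin.castLE hm b : Fin n) < Fin.castLE hm a from hab)
  have hBdet : B.det = 0 := by
    rw [Matrix.det_of_upperTriangular hBtri]
    refine Finset.prod_eq_zero (Finset.mem_univ (⟨(i : ℕ), by omega⟩ : Fin ((i : ℕ) + 1))) ?_
    have : (Fin.castLE hm ⟨(i : ℕ), by omega⟩ : Fin n) = i := Fin.ext rfl
    simp [hB, this, hii]
  obtain ⟨x, hx0, hx⟩ := Matrix.exists_mulVec_eq_zero_iff.2 hBdet
  -- trailing principal block of size n - i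
  have hp : 0 < n - (i : ℕ) := by omega
  set g : Fin (n - (i : ℕ)) → Fin n := fun t => ⟨(i : ℕ) + t, by omega⟩ with hg
  set C : Matrix (Fin (n - (i : ℕ))) (Fin (n - (i : ℕ))) F := A.submatrix g g with hC
  have hCtri : C.BlockTriangular id := by
    intro a b hab
    refine hA (show (g b : Fin n) < g a from ?_)
    simp only [hg, Fin.mk_lt_mk]
    exact Nat.add_lt_add_left hab _
  have hCdet : C.det = 0 := by
    rw [Matrix.det_of_upperTriangular hCtri]
    refine Finset.prod_eq_zero (Finset.mem_univ (⟨0, hp⟩ : Fin (n - (i : ℕ)))) ?_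
    have : g ⟨0, hp⟩ = i := Fin.ext (by simp [hg])
    simp [hC, this, hii]
  obtain ⟨y, hy0, hy⟩ := Matrix.exists_vecMul_eq_zero_iff.2 hCdet
  -- extend x, y by zero
  set u : Fin n → F := fun k => if h : (k : ℕ) < (i : ℕ) + 1 then x ⟨k, h⟩ else 0 with hu
  set v : Fin n → F := fun l => if h : (i : ℕ) ≤ (l : ℕ) then y ⟨(l : ℕ) - i, by omega⟩ else 0
    with hv
  have hucast : ∀ j : Fin ((i : ℕ) + 1), u (Fin.castLE hm j) = x j := by
    intro j
    simp only [hu]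
    rw [dif_pos (show ((Fin.castLE hm j : Fin n) : ℕ) < (i : ℕ) + 1 from j.isLt)]
    exact congrArg x (Fin.ext rfl)
  have hvg : ∀ t : Fin (n - (i : ℕ)), v (g t) = y t := by
    intro t
    simp only [hv, hg]
    rw [dif_pos (by simp)]
    congr 1
    exact Fin.ext (by simp)
  have hu_hi : ∀ j : Fin n, (i : ℕ) + 1 ≤ (j : ℕ) → u j = 0 := by
    intro j hj; simp only [hu]; rw [dif_neg (by omega)]
  have hv_lo : ∀ j : Fin n, (j : ℕ) < (i : ℕ) → v j = 0 := by
    intro j hj; simp only [hv]; rw [dif_neg (by omega)]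
  -- A *ᵥ u = 0
  have hAu : ∀ k : Fin n, ∑ j : Fin n, A k j * u j = 0 := by
    intro k
    rw [sum_fin_restrict hm _ (fun j hj => by rw [hu_hi j hj, mul_zero])]
    by_cases hk : (k : ℕ) < (i : ℕ) + 1
    · have hxk := congrFun hx ⟨k, hk⟩
      simp only [Matrix.mulVec, dotProduct, hB, Matrix.submatrix_apply, Pi.zero_apply] at hxk
      rw [← hxk]
      refine Finset.sum_congr rfl fun j _ => ?_
      rw [hucast j]
      exact congrArg (fun z => A k z * x j) (Fin.ext rfl)
    · refine Finset.sum_eq_zero fun j _ => ?_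
      have : A k (Fin.castLE hm j) = 0 := by
        refine hA ?_
        show (Fin.castLE hm j : Fin n) < k
        rw [Fin.lt_def]
        simp only [Fin.coe_castLE]
        omega
      rw [this, zero_mul]
  -- v ᵥ* A = 0
  have hvA : ∀ l : Fin n, ∑ k : Fin n, v k * A k l = 0 := by
    intro l
    rw [sum_fin_ge (le_of_lt hin) _ (fun j hj => by rw [hv_lo j hj, zero_mul])]
    by_cases hl : (i : ℕ) ≤ (l : ℕ)
    · have hyl := congrFun hy ⟨(l : ℕ) - i, by omega⟩
      simp only [Matrix.vecMul, dotProduct, hC, Matrix.submatrix_apply, Pi.zero_apply] at hyl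
      rw [← hyl]
      refine Finset.sum_congr rfl fun t _ => ?_
      rw [show (⟨(i : ℕ) + t, by omega⟩ : Fin n) = g t from rfl, hvg t]
      congr 1
      refine congrArg (A (g t)) (Fin.ext ?_)
      show (l : ℕ) = (i : ℕ) + ((l : ℕ) - (i : ℕ))
      omega
    · refine Finset.sum_eq_zero fun t _ => ?_
      have : A ⟨(i : ℕ) + t, by omega⟩ l = 0 := by
        refine hA ?_
        show (l : ℕ) < (i : ℕ) + (t : ℕ)
        omega
      rw [this, mul_zero]
  -- the matrix R
  refine ⟨Matrix.of fun k l => u k * v l, ?_, ?_, ?_, ?_, ?_, ?_, ?_, ?_⟩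
  · -- R ≠ 0
    obtain ⟨k0, hk0⟩ := Function.ne_iff.1 hx0
    obtain ⟨l0, hl0⟩ := Function.ne_iff.1 hy0
    intro hR
    have := congrFun (congrFun hR (Fin.castLE hm k0)) (g l0)
    simp only [Matrix.of_apply, Matrix.zero_apply, hucast, hvg] at this
    exact (mul_ne_zero hk0 hl0) this
  · -- block triangular
    intro a b hab
    simp only [Matrix.of_apply]
    have hab' : (b : ℕ) < (a : ℕ) := hab
    by_cases ha : (i : ℕ) + 1 ≤ (a : ℕ)
    · rw [hu_hi a ha, zero_mul]
    · rw [hv_lo b (by omega), mul_zero]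
  · -- A * R = 0
    ext a b
    simp only [Matrix.mul_apply, Matrix.of_apply, Matrix.zero_apply]
    calc ∑ j : Fin n, A a j * (u j * v b) = (∑ j : Fin n, A a j * u j) * v b := by
          rw [Finset.sum_mul]; exact Finset.sum_congr rfl fun j _ => by ring
      _ = 0 := by rw [hAu a, zero_mul]
  · -- R * A = 0
    ext a b
    simp only [Matrix.mul_apply, Matrix.of_apply, Matrix.zero_apply]
    calc ∑ j : Fin n, u a * v j * A j b = u a * ∑ j : Fin n, v j * A j b := by
          rw [Finset.mul_sum]; exact Finset.sum_congr rfl fun j _ => by ring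
      _ = 0 := by rw [hvA b, mul_zero]
  · -- first column zero
    intro k
    simp only [Matrix.of_apply]
    rw [hv_lo ⟨0, by omega⟩ (by show (0 : ℕ) < (i : ℕ); omega), mul_zero]
  · -- last row zero
    intro k
    simp only [Matrix.of_apply]
    rw [hu_hi ⟨n - 1, by omega⟩ (by simp; omega), zero_mul]
  · -- R * E = 0
    ext a b
    simp only [Matrix.mul_apply, Matrix.zero_apply]
    refine Finset.sum_eq_zero fun j _ => ?_
    by_cases hj : (⟨0, by omega⟩ : Fin n) = j
    · have hv0 : v ⟨0, by omega⟩ = 0 := hv_lo _ (by show (0 : ℕ) < (i : ℕ); omega)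
      rw [← hj]
      simp [hv0]
    · simp [Matrix.single, hj]
  · -- E * R = 0
    ext a b
    simp only [Matrix.mul_apply, Matrix.zero_apply]
    refine Finset.sum_eq_zero fun j _ => ?_
    by_cases hj : (⟨n - 1, by omega⟩ : Fin n) = j
    · have hu0 : u ⟨n - 1, by omega⟩ = 0 := hu_hi _ (by simp; omega)
      rw [← hj]
      simp [hu0]
    · simp [Matrix.single, hj]
end

section
/- For n ≥ 3, the orthogonality graph O(T_n) of the algebra of n×n upper triangular matrices over any field F is connected. -/
open Matrix

/-- The orthogonality graph of the algebra of upper triangular `n × n` matrices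
over `F`: vertices are the nonzero singular (equivalently, two-sided zero
divisor) upper triangular matrices, with an edge between distinct `A`, `B` iff
`A * B = B * A = 0`. -/
def orthoGraph (F : Type*) [Field F] (n : ℕ) :
    SimpleGraph {A : Matrix (Fin n) (Fin n) F // A.BlockTriangular id ∧ A ≠ 0 ∧ A.det = 0} where
  Adj X Y := X ≠ Y ∧ X.1 * Y.1 = 0 ∧ Y.1 * X.1 = 0
  symm := ⟨fun X Y h => ⟨h.1.symm, h.2.2, h.2.1⟩⟩
  loopless := ⟨fun X h => h.1 rfl⟩

namespace OrthoAux

variable {F : Type*} [Field F] {n : ℕ}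

/-- Rank-one times rank-one vanishes when the inner vectors are orthogonal. -/
lemma vmv_mul_vmv (u z u' z' : Fin n → F) (h : ∑ l, z l * u' l = 0) :
    vecMulVec u z * vecMulVec u' z' = 0 := by
  ext i j
  simp only [mul_apply, vecMulVec_apply, Matrix.zero_apply]
  have : ∑ l, u i * z l * (u' l * z' j) = (u i * z' j) * ∑ l, z l * u' l := by
    rw [Finset.mul_sum]; exact Finset.sum_congr rfl fun l _ => by ring
  rw [this, h, mul_zero]

lemma mul_vmv_zero (A : Matrix (Fin n) (Fin n) F) (u z : Fin n → F) (h : A *ᵥ u = 0) :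
    A * vecMulVec u z = 0 := by
  ext i j
  simp only [mul_apply, vecMulVec_apply, Matrix.zero_apply]
  have : ∑ l, A i l * (u l * z j) = (∑ l, A i l * u l) * z j := by
    rw [Finset.sum_mul]; exact Finset.sum_congr rfl fun l _ => by ring
  rw [this, show ∑ l, A i l * u l = 0 from congrFun h i, zero_mul]

lemma vmv_mul_zero (A : Matrix (Fin n) (Fin n) F) (u z : Fin n → F) (h : z ᵥ* A = 0) :
    vecMulVec u z * A = 0 := by
  ext i j
  simp only [mul_apply, vecMulVec_apply, Matrix.zero_apply]
  have : ∑ l, u i * z l * A l j = u i * ∑ l, z l * A l j := by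
    rw [Finset.mul_sum]; exact Finset.sum_congr rfl fun l _ => by ring
  rw [this, show ∑ l, z l * A l j = 0 from congrFun h j, mul_zero]

/-- A rank-one upper triangular matrix with "split" supports is a vertex. -/
lemma vmv_mem (hn : 3 ≤ n) (u z : Fin n → F) (k : Fin n)
    (hu : ∀ i, u i ≠ 0 → i ≤ k) (hz : ∀ i, z i ≠ 0 → k ≤ i)
    (hune : u ≠ 0) (hzne : z ≠ 0) :
    (vecMulVec u z).BlockTriangular id ∧ vecMulVec u z ≠ 0 ∧ (vecMulVec u z).det = 0 := by
  have htri : (vecMulVec u z).BlockTriangular id := by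
    intro i j hij
    by_contra h
    rw [vecMulVec_apply] at h
    have hu' : u i ≠ 0 := fun h0 => h (by rw [h0, zero_mul])
    have hz' : z j ≠ 0 := fun h0 => h (by rw [h0, mul_zero])
    exact absurd ((hu i hu').trans (hz j hz')) (not_le.2 hij)
  refine ⟨htri, ?_, ?_⟩
  · obtain ⟨i, hi⟩ := Function.ne_iff.1 hune
    obtain ⟨j, hj⟩ := Function.ne_iff.1 hzne
    intro h
    have := congrFun (congrFun h i) j
    rw [vecMulVec_apply] at this
    exact mul_ne_zero hi hj (by simpa using this)
  · rw [det_of_upperTriangular htri]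
    set j₀ : Fin n := if (k : ℕ) = 0 then ⟨1, by omega⟩ else ⟨0, by omega⟩ with hj₀
    have hj₀k : j₀ ≠ k := by
      rcases Nat.eq_zero_or_pos (k : ℕ) with h | h
      · simp only [hj₀, if_pos h]; intro he; rw [Fin.ext_iff] at he; simp at he; omega
      · simp only [hj₀, if_neg (by omega : ¬(k:ℕ) = 0)]
        intro he; rw [Fin.ext_iff] at he; simp at he; omega
    refine Finset.prod_eq_zero (Finset.mem_univ j₀) ?_
    rw [vecMulVec_apply]
    rcases eq_or_ne (u j₀) 0 with h | h
    · rw [h, zero_mul]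
    rcases eq_or_ne (z j₀) 0 with h' | h'
    · rw [h', mul_zero]
    exact absurd (le_antisymm (hu j₀ h) (hz j₀ h')) hj₀k

/-- A singular upper triangular matrix has a kernel vector supported below a
zero diagonal entry. -/
lemma exists_right_kernel (A : Matrix (Fin n) (Fin n) F) (hA : A.BlockTriangular id)
    (k : Fin n) (hk : A k k = 0) :
    ∃ u : Fin n → F, u ≠ 0 ∧ (∀ i, u i ≠ 0 → i ≤ k) ∧ A *ᵥ u = 0 := by
  set m := (k : ℕ) + 1 with hm
  have hmn : m ≤ n := k.isLt
  set f : Fin m → Fin n := Fin.castLE hmn with hf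
  set M := A.submatrix f f with hM
  have hMtri : M.BlockTriangular id := by
    intro i j hij
    exact hA (show (f j : ℕ) < (f i : ℕ) from hij)
  have hMdet : M.det = 0 := by
    rw [det_of_upperTriangular hMtri]
    refine Finset.prod_eq_zero (Finset.mem_univ (Fin.last (k : ℕ))) ?_
    have h1 : f (Fin.last (k : ℕ)) = k := by ext; simp [hf, Fin.last]
    show A (f (Fin.last _)) (f (Fin.last _)) = 0
    rw [h1]; exact hk
  obtain ⟨u₀, hu₀ne, hu₀⟩ := Matrix.exists_mulVec_eq_zero_iff.2 hMdet
  refine ⟨fun i => if h : (i : ℕ) < m then u₀ ⟨i, h⟩ else 0, ?_, ?_, ?_⟩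
  · obtain ⟨j, hj⟩ := Function.ne_iff.1 hu₀ne
    apply Function.ne_iff.2
    refine ⟨f j, ?_⟩
    have hfj : ((f j : Fin n) : ℕ) < m := by simp [hf]
    have e : (⟨((f j : Fin n) : ℕ), hfj⟩ : Fin m) = j := Fin.ext (by simp [hf])
    show (if h : ((f j : Fin n) : ℕ) < m then u₀ ⟨f j, h⟩ else 0) ≠ 0
    rw [dif_pos hfj, e]; exact hj
  · intro i hi
    by_cases h : (i : ℕ) < m
    · exact Fin.le_def.2 (by omega)
    · simp [h] at hi
  · funext i
    have key : ∑ j : Fin n, A i j * (if h : (j : ℕ) < m then u₀ ⟨j, h⟩ else 0)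
        = ∑ j' : Fin m, A i (f j') * u₀ j' := by
      rw [show (Finset.univ : Finset (Fin n)).sum
            (fun j => A i j * (if h : (j : ℕ) < m then u₀ ⟨j, h⟩ else 0))
          = ((Finset.univ : Finset (Fin m)).map
              ⟨f, Fin.castLE_injective hmn⟩).sum
            (fun j => A i j * (if h : (j : ℕ) < m then u₀ ⟨j, h⟩ else 0)) from ?_]
      · rw [Finset.sum_map]
        refine Finset.sum_congr rfl fun j' _ => ?_
        have hj' : ((f j' : Fin n) : ℕ) < m := by simp [hf]
        simp only [Function.Embedding.coeFn_mk, hj', dif_pos]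
        congr 1
      · refine (Finset.sum_subset (Finset.subset_univ _) ?_).symm
        intro j _ hj
        have : ¬ (j : ℕ) < m := by
          intro h
          exact hj (Finset.mem_map.2 ⟨⟨(j : ℕ), h⟩, Finset.mem_univ _, by ext; simp [hf]⟩)
        simp [this]
    show (fun j => A i j) ⬝ᵥ _ = 0
    rw [show ((fun j => A i j) ⬝ᵥ _) = ∑ j : Fin n, A i j *
        (if h : (j : ℕ) < m then u₀ ⟨j, h⟩ else 0) from rfl, key]
    by_cases h : (i : ℕ) < m
    · have := congrFun hu₀ ⟨(i : ℕ), h⟩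
      simp only [mulVec, dotProduct, Pi.zero_apply] at this
      rw [← this]
      refine Finset.sum_congr rfl fun j' _ => ?_
      congr 1
    · refine Finset.sum_eq_zero fun j' _ => mul_eq_zero_of_left (hA ?_) _
      show ((f j' : Fin n) : ℕ) < (i : ℕ)
      have : ((f j' : Fin n) : ℕ) < m := by simp [hf]
      omega

lemma exists_left_kernel (A : Matrix (Fin n) (Fin n) F) (hA : A.BlockTriangular id)
    (k : Fin n) (hk : A k k = 0) :
    ∃ z : Fin n → F, z ≠ 0 ∧ (∀ i, z i ≠ 0 → k ≤ i) ∧ z ᵥ* A = 0 := by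
  set B : Matrix (Fin n) (Fin n) F := Matrix.of (fun i j => A (Fin.rev j) (Fin.rev i)) with hB
  have hBtri : B.BlockTriangular id := by
    intro i j hij
    exact hA (show Fin.rev i < Fin.rev j from Fin.rev_lt_rev.2 hij)
  have hBk : B (Fin.rev k) (Fin.rev k) = 0 := by simp [hB, Fin.rev_rev, hk]
  obtain ⟨u, hune, hsupp, hu⟩ := exists_right_kernel B hBtri (Fin.rev k) hBk
  refine ⟨fun i => u (Fin.rev i), ?_, ?_, ?_⟩
  · obtain ⟨j, hj⟩ := Function.ne_iff.1 hune
    exact Function.ne_iff.2 ⟨Fin.rev j, by simpa [Fin.rev_rev] using hj⟩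
  · intro i hi
    exact Fin.rev_le_rev.mp (hsupp (Fin.rev i) hi)
  · funext j
    have h0 := congrFun hu (Fin.rev j)
    simp only [mulVec, dotProduct, Pi.zero_apply] at h0
    have hswap : ∑ i, B (Fin.rev j) i * u i = ∑ i, u (Fin.rev i) * A i j :=
      Fintype.sum_bijective Fin.rev Fin.rev_bijective _ _
        (fun x => by simp [hB, Fin.rev_rev, mul_comm])
    show ∑ i, u (Fin.rev i) * A i j = 0
    rw [← hswap]
    exact h0

/-- A nonzero vector supported in `{p, q}` orthogonal to `w`. -/
lemma exists_orth (w : Fin n → F) (p q : Fin n) (hpq : p ≠ q) :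
    ∃ s : Fin n → F, s ≠ 0 ∧ (∀ i, s i ≠ 0 → i = p ∨ i = q) ∧ ∑ i, s i * w i = 0 := by
  by_cases h : w p = 0
  · refine ⟨fun i => if i = p then 1 else 0, ?_, ?_, ?_⟩
    · exact Function.ne_iff.2 ⟨p, by simp⟩
    · intro i hi
      by_cases h' : i = p
      · exact Or.inl h'
      · simp [h'] at hi
    · rw [show ∑ i, (if i = p then (1:F) else 0) * w i
          = ∑ i, (if i = p then w i else 0) from
        Finset.sum_congr rfl fun i _ => by by_cases h' : i = p <;> simp [h']]
      simp [h]
  · refine ⟨fun i => if i = p then w q else if i = q then -(w p) else 0, ?_, ?_, ?_⟩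
    · refine Function.ne_iff.2 ⟨q, ?_⟩
      simp [hpq.symm, h]
    · intro i hi
      by_cases h1 : i = p
      · exact Or.inl h1
      by_cases h2 : i = q
      · exact Or.inr h2
      · simp [h1, h2] at hi
    · rw [show ∑ i, (if i = p then w q else if i = q then -(w p) else 0) * w i
          = ∑ i ∈ ({p, q} : Finset (Fin n)),
              (if i = p then w q else if i = q then -(w p) else 0) * w i from
        (Finset.sum_subset (Finset.subset_univ _) fun i _ hi => by
          have h1 : i ≠ p ∧ i ≠ q := by
            simpa [Finset.mem_insert, Finset.mem_singleton, not_or] using hi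
          simp [h1.1, h1.2]).symm]
      rw [Finset.sum_pair hpq]
      have e1 : (if p = p then w q else if p = q then -(w p) else 0) = w q := if_pos rfl
      have e2 : (if q = p then w q else if q = q then -(w p) else 0) = -(w p) := by
        rw [if_neg hpq.symm, if_pos rfl]
      rw [e1, e2]
      ring

lemma reach_of_mul (X Y : {A : Matrix (Fin n) (Fin n) F //
      A.BlockTriangular id ∧ A ≠ 0 ∧ A.det = 0})
    (h1 : X.1 * Y.1 = 0) (h2 : Y.1 * X.1 = 0) : (orthoGraph F n).Reachable X Y := by
  rcases eq_or_ne X Y with rfl | h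
  · exact SimpleGraph.Reachable.refl X
  · exact SimpleGraph.Adj.reachable (show (orthoGraph F n).Adj X Y from ⟨h, h1, h2⟩)

end OrthoAux

open OrthoAux in
/-- For `n ≥ 3` the orthogonality graph `O(Tₙ)` is connected. -/
theorem stmt_8 {F : Type*} [Field F] {n : ℕ} (hn : 3 ≤ n) :
    (orthoGraph F n).Connected := by
  classical
  let V := {A : Matrix (Fin n) (Fin n) F // A.BlockTriangular id ∧ A ≠ 0 ∧ A.det = 0}
  let e0 : Fin n := ⟨0, by omega⟩
  let e1 : Fin n := ⟨1, by omega⟩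
  let e2 : Fin n := ⟨2, by omega⟩
  let el : Fin n := ⟨n - 1, by omega⟩
  let b : Fin n → Fin n → F := fun i j => if j = i then 1 else 0
  have hb : b = fun i j => if j = i then 1 else 0 := rfl
  have hbne : ∀ i, b i ≠ 0 := fun i => Function.ne_iff.2 ⟨i, by simp [hb]⟩
  have hbsupp : ∀ i j, b i j ≠ 0 → j = i := by
    intro i j hj
    by_contra h
    simp [hb, h] at hj
  have hubprops := vmv_mem hn (b e0) (b el) e0
    (fun i hi => le_of_eq (hbsupp _ _ hi))
    (fun i hi => (hbsupp _ _ hi) ▸ (by exact Fin.mk_le_mk.2 (by omega)))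
    (hbne e0) (hbne el)
  let hub : V := ⟨vecMulVec (b e0) (b el), hubprops⟩
  have main : ∀ X : V, (orthoGraph F n).Reachable X hub := by
    intro X
    obtain ⟨A, hAtri, hAne, hAdet⟩ := X
    -- find a zero diagonal entry
    have hdiag : ∃ k : Fin n, A k k = 0 := by
      rw [det_of_upperTriangular hAtri] at hAdet
      obtain ⟨k, _, hk⟩ := Finset.prod_eq_zero_iff.1 hAdet
      exact ⟨k, hk⟩
    obtain ⟨k, hk⟩ := hdiag
    obtain ⟨u, hune, husupp, hu⟩ := exists_right_kernel A hAtri k hk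
    obtain ⟨z, hzne, hzsupp, hz⟩ := exists_left_kernel A hAtri k hk
    have hX1props := vmv_mem hn u z k husupp hzsupp hune hzne
    let X1 : V := ⟨vecMulVec u z, hX1props⟩
    -- middle rank-one matrix
    have h01 : e0 ≠ e1 := by simp [e0, e1, Fin.ext_iff]
    have h12 : e1 ≠ e2 := by simp [e1, e2, Fin.ext_iff]
    obtain ⟨u', hu'ne, hu'supp, hu'orth⟩ := exists_orth z e0 e1 h01
    obtain ⟨z', hz'ne, hz'supp, hz'orth⟩ := exists_orth u e1 e2 h12
    have hYprops := vmv_mem hn u' z' e1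
      (fun i hi => by
        rcases hu'supp i hi with h | h
        · rw [h]; exact Fin.mk_le_mk.2 (by omega)
        · rw [h])
      (fun i hi => by
        rcases hz'supp i hi with h | h
        · rw [h]
        · rw [h]; exact Fin.mk_le_mk.2 (by omega))
      hu'ne hz'ne
    let Y : V := ⟨vecMulVec u' z', hYprops⟩
    -- reach X → X1
    have r1 : (orthoGraph F n).Reachable ⟨A, hAtri, hAne, hAdet⟩ X1 :=
      reach_of_mul _ _ (mul_vmv_zero A u z hu) (vmv_mul_zero A u z hz)
    -- reach X1 → Y
    have r2 : (orthoGraph F n).Reachable X1 Y := by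
      refine reach_of_mul _ _ ?_ ?_
      · exact vmv_mul_vmv u z u' z'
          (by rw [← hu'orth]; exact Finset.sum_congr rfl fun i _ => mul_comm _ _)
      · exact vmv_mul_vmv u' z' u z hz'orth
    -- reach Y → hub
    have r3 : (orthoGraph F n).Reachable Y hub := by
      refine reach_of_mul _ _ ?_ ?_
      · refine vmv_mul_vmv u' z' (b e0) (b el) ?_
        have hz'0 : z' e0 = 0 := by
          by_contra h
          rcases hz'supp e0 h with h' | h'
          · exact h01 h'
          · exact absurd h' (by simp [e0, e2, Fin.ext_iff])
        rw [show ∑ l, z' l * b e0 l = ∑ l, (if l = e0 then z' l else 0) from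
          Finset.sum_congr rfl fun l _ => by by_cases h' : l = e0 <;> simp [hb, h']]
        simp [hz'0]
      · refine vmv_mul_vmv (b e0) (b el) u' z' ?_
        have hu'l : u' el = 0 := by
          by_contra h
          rcases hu'supp el h with h' | h'
          · exact absurd h' (by simp [el, e0, Fin.ext_iff]; omega)
          · exact absurd h' (by simp [el, e1, Fin.ext_iff]; omega)
        rw [show ∑ l, b el l * u' l = ∑ l, (if l = el then u' l else 0) from
          Finset.sum_congr rfl fun l _ => by by_cases h' : l = el <;> simp [hb, h']]
        simp [hu'l]
    exact (r1.trans r2).trans r3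
  rw [SimpleGraph.connected_iff]
  exact ⟨fun X Y => (main X).trans (main Y).symm, ⟨hub⟩⟩
end

section
/- Let n ≥ 3, Â = I_n - E_{11} (the diagonal matrix with 0 in position (1,1) and 1 elsewhere) and B̂ = J_n (the n×n nilpotent Jordan block with eigenvalue 0). Then the set of upper triangular matrices orthogonal to Â is exactly { α E_{11} : α ∈ F }, and the set of upper triangular matrices orthogonal to B̂ is exactly { α E_{1n} : α ∈ F }. -/
open Matrix

/-- For `n ≥ 3`, the upper triangular matrices orthogonal to `Â = I - E₁₁` are
exactly the scalar multiples of `E₁₁`, and those orthogonal to the nilpotent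
Jordan block `B̂ = Jₙ` are exactly the scalar multiples of `E₁ₙ`. -/
theorem stmt_10 {F : Type*} [Field F] {n : ℕ} (hn : 3 ≤ n) :
    (∀ C : Matrix (Fin n) (Fin n) F, C.BlockTriangular id →
      (((1 - Matrix.single (⟨0, by omega⟩ : Fin n) (⟨0, by omega⟩ : Fin n) (1 : F)) * C = 0 ∧
        C * (1 - Matrix.single (⟨0, by omega⟩ : Fin n) (⟨0, by omega⟩ : Fin n) (1 : F)) = 0) ↔
        ∃ α : F, C = α • Matrix.single (⟨0, by omega⟩ : Fin n) (⟨0, by omega⟩ : Fin n) (1 : F))) ∧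
    (∀ C : Matrix (Fin n) (Fin n) F, C.BlockTriangular id →
      (((Matrix.of fun i j : Fin n => if (i : ℕ) + 1 = (j : ℕ) then (1 : F) else 0) * C = 0 ∧
        C * (Matrix.of fun i j : Fin n => if (i : ℕ) + 1 = (j : ℕ) then (1 : F) else 0) = 0) ↔
        ∃ α : F, C = α • Matrix.single (⟨0, by omega⟩ : Fin n) (⟨n - 1, by omega⟩ : Fin n) (1 : F))) := by
  set z : Fin n := ⟨0, by omega⟩ with hz
  set w : Fin n := ⟨n - 1, by omega⟩ with hw
  have hzv : (z : ℕ) = 0 := rfl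
  have hwv : (w : ℕ) = n - 1 := rfl
  constructor
  · intro C _
    constructor
    · rintro ⟨h1, h2⟩
      have hC1 : C = Matrix.single z z (1 : F) * C := by
        rw [sub_mul, one_mul, sub_eq_zero] at h1; exact h1
      have hC2 : C = C * Matrix.single z z (1 : F) := by
        rw [mul_sub, mul_one, sub_eq_zero] at h2; exact h2
      refine ⟨C z z, ?_⟩
      ext i j
      simp only [Matrix.smul_apply, Matrix.single, of_apply, smul_eq_mul]
      by_cases hi : z = i
      · by_cases hj : z = j
        · rw [if_pos ⟨hi, hj⟩, mul_one, ← hi, ← hj]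
        · rw [if_neg (fun h => hj h.2), mul_zero, hC2]
          exact Matrix.mul_single_apply_of_ne (c := (1 : F)) z z i j (fun h => hj h.symm) C
      · rw [if_neg (fun h => hi h.1), mul_zero, hC1]
        exact Matrix.single_mul_apply_of_ne (c := (1 : F)) z z i j (fun h => hi h.symm) C
    · rintro ⟨α, rfl⟩
      have key : Matrix.single z z (1 : F) * Matrix.single z z (1 : F) =
          Matrix.single z z (1 : F) := by rw [Matrix.single_mul_single_same, one_mul]
      constructor
      · rw [sub_mul, one_mul, mul_smul_comm, key, sub_self]
      · rw [mul_sub, mul_one, smul_mul_assoc, key, sub_self]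
  · intro C _
    constructor
    · rintro ⟨h1, h2⟩
      have hrow : ∀ i j : Fin n, 1 ≤ (i : ℕ) → C i j = 0 := by
        intro i j hi
        have e := congrFun (congrFun h1 ⟨(i : ℕ) - 1, by omega⟩) j
        simp only [Matrix.mul_apply, of_apply, ite_mul, one_mul, zero_mul,
          Matrix.zero_apply] at e
        rw [Finset.sum_eq_single i] at e
        · rwa [if_pos (show ((i : ℕ) - 1) + 1 = (i : ℕ) by omega)] at e
        · intro b _ hb
          rw [if_neg]
          intro hc
          have hc' : ((i : ℕ) - 1) + 1 = (b : ℕ) := hc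
          exact hb (Fin.ext (by omega))
        · simp
      have hcol : ∀ i j : Fin n, (j : ℕ) < n - 1 → C i j = 0 := by
        intro i j hj
        have e := congrFun (congrFun h2 i) ⟨(j : ℕ) + 1, by omega⟩
        simp only [Matrix.mul_apply, of_apply, mul_ite, mul_one, mul_zero,
          Matrix.zero_apply] at e
        rw [Finset.sum_eq_single j] at e
        · rwa [if_pos (show (j : ℕ) + 1 = (j : ℕ) + 1 from rfl)] at e
        · intro b _ hb
          rw [if_neg]
          intro hc
          have hc' : (b : ℕ) + 1 = (j : ℕ) + 1 := hc
          exact hb (Fin.ext (by omega))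
        · simp
      refine ⟨C z w, ?_⟩
      ext i j
      simp only [Matrix.smul_apply, Matrix.single, of_apply, smul_eq_mul]
      by_cases hi : z = i
      · by_cases hj : w = j
        · rw [if_pos ⟨hi, hj⟩, mul_one, ← hi, ← hj]
        · rw [if_neg (fun h => hj h.2), mul_zero]
          refine hcol i j ?_
          have h1 : (j : ℕ) ≠ n - 1 := fun h => hj (Fin.ext (by rw [hwv, h]))
          have := j.isLt
          omega
      · rw [if_neg (fun h => hi h.1), mul_zero]
        refine hrow i j ?_
        have h1 : (i : ℕ) ≠ 0 := fun h => hi (Fin.ext (by rw [hzv, h]))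
        omega
    · rintro ⟨α, rfl⟩
      constructor
      · ext a b
        simp only [Matrix.mul_apply, Matrix.smul_apply, Matrix.zero_apply, of_apply,
          Matrix.single, smul_eq_mul]
        refine Finset.sum_eq_zero fun k _ => ?_
        by_cases hk : z = k
        · rw [if_neg, zero_mul]
          have hk' : (k : ℕ) = 0 := by rw [← hk]
          omega
        · simp [hk]
      · ext a b
        simp only [Matrix.mul_apply, Matrix.smul_apply, Matrix.zero_apply, of_apply,
          Matrix.single, smul_eq_mul]
        refine Finset.sum_eq_zero fun k _ => ?_
        by_cases hk : w = k
        · have hk' : (k : ℕ) = n - 1 := by rw [← hk]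
          have hb := b.isLt
          rw [if_neg (show ¬((k : ℕ) + 1 = (b : ℕ)) by omega), mul_zero]
        · simp [hk]
end

section
/- The orthogonality graph O(T_2(F)) is disconnected for every field F: for instance, E_{12} and E_{11} lie in different connected components. -/
open Matrix

namespace Ortho16

variable {F : Type*} [Field F]

abbrev V (F : Type*) [Field F] :=
  {A : Matrix (Fin 2) (Fin 2) F // A.BlockTriangular id ∧ A ≠ 0 ∧ A.det = 0}

def Inv (X : V F) : Prop := X.1 0 0 = 0 ∧ X.1 1 1 = 0

lemma step {X Y : V F} (hX : Inv X) (h : (orthoGraph F 2).Adj X Y) : Inv Y := by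
  have h10 : X.1 1 0 = 0 := X.2.1 (show (id (0:Fin 2)) < id 1 by decide)
  have h01 : X.1 0 1 ≠ 0 := by
    intro hz
    apply X.2.2.1
    ext i j
    fin_cases i <;> fin_cases j <;>
      simpa using by first | exact hX.1 | exact hz | exact h10 | exact hX.2
  obtain ⟨_, hXY, hYX⟩ := h
  constructor
  · have := congrFun (congrFun hYX 0) 1
    simp [Matrix.mul_apply, Fin.sum_univ_two, hX.2] at this
    rcases this with h | h
    · exact h
    · exact absurd h h01
  · have := congrFun (congrFun hXY 0) 1
    simp [Matrix.mul_apply, Fin.sum_univ_two, hX.1] at this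
    rcases this with h | h
    · exact absurd h h01
    · exact h

lemma reach {X Y : V F} (hX : Inv X) (h : (orthoGraph F 2).Reachable X Y) : Inv Y := by
  obtain ⟨w⟩ := h
  induction w with
  | nil => exact hX
  | cons h _ ih => exact ih (step hX h)

lemma part2 : ∀ X Y : V F,
    X.1 = single (0 : Fin 2) (1 : Fin 2) (1 : F) →
    Y.1 = single (0 : Fin 2) (0 : Fin 2) (1 : F) →
    ¬ (orthoGraph F 2).Reachable X Y := by
  intro X Y hX hY hr
  have hXI : Inv X := by constructor <;> simp [hX, single]
  have := (reach hXI hr).1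
  rw [hY] at this
  simp [single] at this

def E12 : V F :=
  ⟨single 0 1 1, by
    intro i j hij
    fin_cases i <;> fin_cases j <;> simp_all [single] <;> omega, by
    intro h
    have := congrFun (congrFun h 0) 1
    simp [single] at this, by
    simp [Matrix.det_fin_two, single]⟩

def E11 : V F :=
  ⟨single 0 0 1, by
    intro i j hij
    fin_cases i <;> fin_cases j <;> simp_all [single] <;> omega, by
    intro h
    have := congrFun (congrFun h 0) 0
    simp [single] at this, by
    simp [Matrix.det_fin_two, single]⟩

end Ortho16

/-- `O(T₂)` is disconnected for every field `F`; in particular `E₁₂` and `E₁₁`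
lie in different connected components. -/
theorem stmt_16 {F : Type*} [Field F] :
    ¬ (orthoGraph F 2).Connected ∧
    ∀ X Y : {A : Matrix (Fin 2) (Fin 2) F // A.BlockTriangular id ∧ A ≠ 0 ∧ A.det = 0},
      X.1 = single (0 : Fin 2) (1 : Fin 2) (1 : F) →
      Y.1 = single (0 : Fin 2) (0 : Fin 2) (1 : F) →
      ¬ (orthoGraph F 2).Reachable X Y := by
  refine ⟨fun hc => ?_, Ortho16.part2⟩
  exact Ortho16.part2 Ortho16.E12 Ortho16.E11 rfl rfl (hc.preconnected _ _)
end

section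
/- Let n ≥ 3 and A, B ∈ T_n be nonzero singular upper triangular matrices each having some zero diagonal entry at a position (i,i) with 2 ≤ i ≤ n-1 (for A) and (j,j) with 2 ≤ j ≤ n-1 (for B). Then the distance between A and B in the orthogonality graph O(T_n) is at most 4, realized by a path A - R_i - E_{1n} - R_j - B where R_i, R_j are rank-one matrices with zero first column and zero last row. -/
open Matrix

section auxlemmas
variable {F : Type*} [Field F] {n : ℕ}

variable {F : Type*} [Field F] {n : ℕ}

/-- Right kernel vector supported on indices `≤ i`. -/
lemma aux_ker (A : Matrix (Fin n) (Fin n) F) (hA : A.BlockTriangular id)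
    (i : Fin n) (hii : A i i = 0) :
    ∃ x : Fin n → F, x ≠ 0 ∧ A.mulVec x = 0 ∧ ∀ l : Fin n, i < l → x l = 0 := by
  set m : ℕ := (i : ℕ) + 1 with hmdef
  have hm : m ≤ n := i.isLt
  set A' : Matrix (Fin m) (Fin m) F :=
    A.submatrix (Fin.castLE hm) (Fin.castLE hm) with hA'def
  have hA' : A'.BlockTriangular id := by
    intro k l hlt
    exact hA (show (Fin.castLE hm l : Fin n) < Fin.castLE hm k from hlt)
  have hdet : A'.det = 0 := by
    rw [Matrix.det_of_upperTriangular hA']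
    refine Finset.prod_eq_zero (Finset.mem_univ (⟨(i : ℕ), by omega⟩ : Fin m)) ?_
    have : (Fin.castLE hm ⟨(i : ℕ), by omega⟩ : Fin n) = i := by ext; rfl
    simp [hA'def, Matrix.submatrix_apply, this, hii]
  obtain ⟨v, hv0, hv⟩ := Matrix.exists_mulVec_eq_zero_iff.mpr hdet
  refine ⟨fun k => if hk : (k : ℕ) < m then v ⟨k, hk⟩ else 0, ?_, ?_, ?_⟩
  · obtain ⟨k, hk⟩ := Function.ne_iff.mp hv0
    apply Function.ne_iff.mpr
    refine ⟨Fin.castLE hm k, ?_⟩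
    have hlt : ((Fin.castLE hm k : Fin n) : ℕ) < m := k.isLt
    simpa [dif_pos hlt] using hk
  · ext k
    simp only [Matrix.mulVec, dotProduct, Pi.zero_apply]
    by_cases hk : (k : ℕ) < m
    · have key := congrFun hv ⟨k, hk⟩
      simp only [Matrix.mulVec, dotProduct, Pi.zero_apply] at key
      have hsub : ∑ l : Fin n, A k l * (if hl : (l : ℕ) < m then v ⟨l, hl⟩ else 0)
          = ∑ l ∈ Finset.univ.map (Fin.castLEEmb hm),
              A k l * (if hl : (l : ℕ) < m then v ⟨l, hl⟩ else 0) := by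
        refine (Finset.sum_subset (Finset.subset_univ _) ?_).symm
        intro l _ hl
        have : ¬ (l : ℕ) < m := by
          intro hlt
          exact hl (Finset.mem_map.mpr ⟨⟨(l : ℕ), hlt⟩, Finset.mem_univ _, by ext; rfl⟩)
        simp [this]
      rw [hsub, Finset.sum_map]
      rw [← key]
      apply Finset.sum_congr rfl
      intro l _
      have hl : ((Fin.castLEEmb hm) l : ℕ) < m := l.isLt
      have h1 : ((Fin.castLEEmb hm) l : Fin n) = Fin.castLE hm l := rfl
      have h2 : A' ⟨(k : ℕ), hk⟩ l = A k (Fin.castLE hm l) := by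
        simp only [hA'def, Matrix.submatrix_apply]
        congr 1
      rw [h1, dif_pos (show ((Fin.castLE hm l : Fin n) : ℕ) < m from l.isLt)]
      rw [h2]
      congr 1
    · apply Finset.sum_eq_zero
      intro l _
      by_cases hl : (l : ℕ) < m
      · have : A k l = 0 := hA (show (l : Fin n) < k by
          simp only [Fin.lt_def]; omega)
        simp [this]
      · simp [hl]
  · intro l hl
    have : ¬ (l : ℕ) < m := by simp only [Fin.lt_def] at hl; omega
    simp [this]

/-- Left kernel vector supported on indices `≥ i`. -/
lemma aux_coker (A : Matrix (Fin n) (Fin n) F) (hA : A.BlockTriangular id)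
    (i : Fin n) (hii : A i i = 0) :
    ∃ y : Fin n → F, y ≠ 0 ∧ A.vecMul y = 0 ∧ ∀ l : Fin n, l < i → y l = 0 := by
  set Ao : Matrix (Fin n) (Fin n) F := Aᵀ.submatrix Fin.rev Fin.rev with hAo
  have hAo' : Ao.BlockTriangular id := by
    intro p q hlt
    exact hA (show (Fin.rev p : Fin n) < Fin.rev q from Fin.rev_lt_rev.mpr hlt)
  have hiio : Ao i.rev i.rev = 0 := by
    simp [hAo, Matrix.submatrix_apply, Fin.rev_rev, hii]
  obtain ⟨x, hx0, hx, hxsupp⟩ := aux_ker Ao hAo' i.rev hiio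
  refine ⟨fun r => x r.rev, ?_, ?_, ?_⟩
  · intro h
    apply hx0
    funext l
    have := congrFun h l.rev
    simpa [Fin.rev_rev] using this
  · funext c
    have key := congrFun hx c.rev
    simp only [Matrix.mulVec, dotProduct, Pi.zero_apply] at key
    simp only [Matrix.vecMul, dotProduct, Pi.zero_apply]
    rw [← key]
    rw [← Fintype.sum_equiv (Fin.revPerm (n := n)) _ _ (fun r => rfl)]
    apply Finset.sum_congr rfl
    intro r _
    simp [hAo, Matrix.submatrix_apply, Fin.rev_rev, mul_comm]
  · intro l hl
    exact hxsupp l.rev (Fin.rev_lt_rev.mpr hl)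

lemma aux_mul_vecMulVec (A : Matrix (Fin n) (Fin n) F) (x y : Fin n → F) :
    A * vecMulVec x y = vecMulVec (A.mulVec x) y := by
  ext k l
  simp [Matrix.mul_apply, Matrix.vecMulVec_apply, Matrix.mulVec, dotProduct,
    Finset.sum_mul, mul_assoc]

lemma aux_vecMulVec_mul (A : Matrix (Fin n) (Fin n) F) (x y : Fin n → F) :
    vecMulVec x y * A = vecMulVec x (A.vecMul y) := by
  ext k l
  simp [Matrix.mul_apply, Matrix.vecMulVec_apply, Matrix.vecMul, dotProduct,
    Finset.mul_sum, mul_assoc]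

lemma aux_rank_one {x y : Fin n → F} (hx : x ≠ 0) (hy : y ≠ 0) :
    (vecMulVec x y).rank = 1 := by
  have hle : (vecMulVec x y).rank ≤ 1 := by
    rw [Matrix.vecMulVec_eq (Fin 1)]
    refine le_trans (Matrix.rank_mul_le_right _ _) ?_
    simpa using Matrix.rank_le_card_height (Matrix.replicateRow (Fin 1) y)
  have hne : (vecMulVec x y) ≠ 0 := by
    obtain ⟨k, hk⟩ := Function.ne_iff.mp hx
    obtain ⟨l, hl⟩ := Function.ne_iff.mp hy
    intro h
    have := congrFun (congrFun h k) l
    simp only [Matrix.vecMulVec_apply, Matrix.zero_apply] at this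
    exact hk (by rcases mul_eq_zero.mp this with h' | h'; exact h'; exact absurd h' hl)
  have hpos : 0 < (vecMulVec x y).rank := by
    rcases Nat.eq_zero_or_pos (vecMulVec x y).rank with h | h; swap
    · exact h
    · exfalso
      apply hne
      rw [Matrix.rank, Submodule.finrank_eq_zero] at h
      · ext k l
        have : (vecMulVec x y).mulVec (Pi.single l 1) = 0 := by
          have hmem : (vecMulVec x y).mulVec (Pi.single l 1) ∈
              LinearMap.range (vecMulVec x y).mulVecLin := ⟨Pi.single l 1, rfl⟩
          rw [h] at hmem
          simpa using hmem
        have := congrFun this k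
        simpa [Matrix.mulVec_single] using this
  omega

lemma aux_std_mul_right (R : Matrix (Fin n) (Fin n) F) (a b : Fin n)
    (h : ∀ k, R k a = 0) : R * Matrix.single a b (1 : F) = 0 := by
  ext k l
  simp only [Matrix.mul_apply, Matrix.single, Matrix.of_apply, Matrix.zero_apply,
    mul_ite, mul_one, mul_zero]
  rw [Finset.sum_eq_zero]
  intro m _
  by_cases hm : a = m ∧ b = l
  · obtain ⟨rfl, rfl⟩ := hm
    simp [h k]
  · simp [hm]

lemma aux_std_mul_left (R : Matrix (Fin n) (Fin n) F) (a b : Fin n)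
    (h : ∀ k, R b k = 0) : Matrix.single a b (1 : F) * R = 0 := by
  ext k l
  simp only [Matrix.mul_apply, Matrix.single, Matrix.of_apply, Matrix.zero_apply,
    ite_mul, one_mul, zero_mul]
  rw [Finset.sum_eq_zero]
  intro m _
  by_cases hm : a = k ∧ b = m
  · obtain ⟨rfl, rfl⟩ := hm
    simp [h l]
  · simp [hm]

lemma aux_R (hn : 3 ≤ n) (A : Matrix (Fin n) (Fin n) F) (hA : A.BlockTriangular id)
    (i : Fin n) (hii : A i i = 0) (hi1 : 1 ≤ (i : ℕ)) (hi2 : (i : ℕ) ≤ n - 2) :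
    ∃ R : Matrix (Fin n) (Fin n) F, R.BlockTriangular id ∧ R.rank = 1 ∧
      (∀ k, R k ⟨0, by omega⟩ = 0) ∧ (∀ k, R ⟨n - 1, by omega⟩ k = 0) ∧
      A * R = 0 ∧ R * A = 0 ∧ R ≠ 0 ∧ R.det = 0 := by
  obtain ⟨x, hx0, hx, hxs⟩ := aux_ker A hA i hii
  obtain ⟨y, hy0, hy, hys⟩ := aux_coker A hA i hii
  refine ⟨vecMulVec x y, ?_, aux_rank_one hx0 hy0, ?_, ?_, ?_, ?_, ?_, ?_⟩
  · intro k l hlt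
    rw [Matrix.vecMulVec_apply]
    rcases lt_or_ge (i : ℕ) (k : ℕ) with h | h
    · rw [hxs k (show i < k from h), zero_mul]
    · have : (l : ℕ) < (i : ℕ) := lt_of_lt_of_le hlt h
      rw [hys l (show l < i from this), mul_zero]
  · intro k
    rw [Matrix.vecMulVec_apply, hys ⟨0, by omega⟩ (by simp [Fin.lt_def]; omega), mul_zero]
  · intro k
    rw [Matrix.vecMulVec_apply, hxs ⟨n - 1, by omega⟩ (by simp [Fin.lt_def]; omega), zero_mul]
  · rw [aux_mul_vecMulVec, hx]
    ext k l; simp [Matrix.vecMulVec_apply]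
  · rw [aux_vecMulVec_mul, hy]
    ext k l; simp [Matrix.vecMulVec_apply]
  · intro h
    have := aux_rank_one hx0 hy0
    rw [h, Matrix.rank_zero] at this
    exact absurd this (by norm_num)
  · have htri : (vecMulVec x y).BlockTriangular id := by
      intro k l hlt
      rw [Matrix.vecMulVec_apply]
      rcases lt_or_ge (i : ℕ) (k : ℕ) with h | h
      · rw [hxs k (show i < k from h), zero_mul]
      · have : (l : ℕ) < (i : ℕ) := lt_of_lt_of_le hlt h
        rw [hys l (show l < i from this), mul_zero]
    rw [Matrix.det_of_upperTriangular htri]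
    refine Finset.prod_eq_zero (Finset.mem_univ (⟨n - 1, by omega⟩ : Fin n)) ?_
    rw [Matrix.vecMulVec_apply, hxs ⟨n - 1, by omega⟩ (by simp [Fin.lt_def]; omega), zero_mul]



lemma aux_edist_le_one {X Y : {A : Matrix (Fin n) (Fin n) F // A.BlockTriangular id ∧ A ≠ 0 ∧ A.det = 0}}
    (h1 : X.1 * Y.1 = 0) (h2 : Y.1 * X.1 = 0) : (orthoGraph F n).edist X Y ≤ 1 := by
  by_cases h : X = Y
  · subst h
    simp [SimpleGraph.edist_self]
  · exact le_of_eq (SimpleGraph.edist_eq_one_iff_adj.mpr ⟨h, h1, h2⟩)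
end auxlemmas

/-- If `A`, `B` are nonzero singular upper triangular matrices (`n ≥ 3`), each
with a zero diagonal entry at an interior position (1-based `2 ≤ i ≤ n - 1`,
i.e. `1 ≤ i ≤ n - 2` for `Fin n`), then `d(A, B) ≤ 4` in `O(Tₙ)`, realized by a
path `A - Rᵢ - E₁ₙ - Rⱼ - B` with `Rᵢ`, `Rⱼ` rank-one matrices having zero
first column and zero last row. -/
theorem stmt_19 {F : Type*} [Field F] {n : ℕ} (hn : 3 ≤ n)
    (A B : Matrix (Fin n) (Fin n) F)
    (hA : A.BlockTriangular id) (hA0 : A ≠ 0) (hAsing : A.det = 0)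
    (hB : B.BlockTriangular id) (hB0 : B ≠ 0) (hBsing : B.det = 0)
    (i : Fin n) (hii : A i i = 0) (hi1 : 1 ≤ (i : ℕ)) (hi2 : (i : ℕ) ≤ n - 2)
    (j : Fin n) (hjj : B j j = 0) (hj1 : 1 ≤ (j : ℕ)) (hj2 : (j : ℕ) ≤ n - 2) :
    (∃ Ri Rj : Matrix (Fin n) (Fin n) F,
      Ri.BlockTriangular id ∧ Rj.BlockTriangular id ∧
      Ri.rank = 1 ∧ Rj.rank = 1 ∧
      (∀ k : Fin n, Ri k ⟨0, by omega⟩ = 0) ∧ (∀ k : Fin n, Ri ⟨n - 1, by omega⟩ k = 0) ∧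
      (∀ k : Fin n, Rj k ⟨0, by omega⟩ = 0) ∧ (∀ k : Fin n, Rj ⟨n - 1, by omega⟩ k = 0) ∧
      A * Ri = 0 ∧ Ri * A = 0 ∧
      Ri * Matrix.single (⟨0, by omega⟩ : Fin n) (⟨n - 1, by omega⟩ : Fin n) (1 : F) = 0 ∧
      Matrix.single (⟨0, by omega⟩ : Fin n) (⟨n - 1, by omega⟩ : Fin n) (1 : F) * Ri = 0 ∧
      Rj * Matrix.single (⟨0, by omega⟩ : Fin n) (⟨n - 1, by omega⟩ : Fin n) (1 : F) = 0 ∧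
      Matrix.single (⟨0, by omega⟩ : Fin n) (⟨n - 1, by omega⟩ : Fin n) (1 : F) * Rj = 0 ∧
      B * Rj = 0 ∧ Rj * B = 0) ∧
    ∀ X Y : {M : Matrix (Fin n) (Fin n) F // M.BlockTriangular id ∧ M ≠ 0 ∧ M.det = 0},
      X.1 = A → Y.1 = B → (orthoGraph F n).edist X Y ≤ 4 := by
  obtain ⟨Ri, hRit, hRir, hRic, hRirow, hARi, hRiA, hRine, hRidet⟩ := aux_R hn A hA i hii hi1 hi2
  obtain ⟨Rj, hRjt, hRjr, hRjc, hRjrow, hBRj, hRjB, hRjne, hRjdet⟩ := aux_R hn B hB j hjj hj1 hj2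
  set e0 : Fin n := ⟨0, by omega⟩ with he0
  set en : Fin n := ⟨n - 1, by omega⟩ with hen
  have hRiE := aux_std_mul_right Ri e0 en hRic
  have hERi := aux_std_mul_left Ri e0 en hRirow
  have hRjE := aux_std_mul_right Rj e0 en hRjc
  have hERj := aux_std_mul_left Rj e0 en hRjrow
  constructor
  · exact ⟨Ri, Rj, hRit, hRjt, hRir, hRjr, hRic, hRirow, hRjc, hRjrow, hARi, hRiA,
      hRiE, hERi, hRjE, hERj, hBRj, hRjB⟩
  · intro X Y hX hY
    have hne : e0 ≠ en := by
      simp only [he0, hen, ne_eq, Fin.mk.injEq]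
      omega
    have hEt : (Matrix.single e0 en (1 : F)).BlockTriangular id := by
      intro k l hlt
      by_cases hm : e0 = k ∧ en = l
      · exfalso
        obtain ⟨rfl, rfl⟩ := hm
        have : (en : ℕ) < (e0 : ℕ) := hlt
        simp only [he0, hen] at this
        omega
      · simp [Matrix.single, hm]
    have hEne : Matrix.single e0 en (1 : F) ≠ 0 := by
      intro h
      have := congrFun (congrFun h e0) en
      simp [Matrix.single] at this
    have hEdet : (Matrix.single e0 en (1 : F)).det = 0 := by
      rw [Matrix.det_of_upperTriangular hEt]
      refine Finset.prod_eq_zero (Finset.mem_univ e0) ?_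
      simp [Matrix.single, hne, hne.symm]
    set vRi : {M : Matrix (Fin n) (Fin n) F // M.BlockTriangular id ∧ M ≠ 0 ∧ M.det = 0} :=
      ⟨Ri, hRit, hRine, hRidet⟩ with hvRi
    set vRj : {M : Matrix (Fin n) (Fin n) F // M.BlockTriangular id ∧ M ≠ 0 ∧ M.det = 0} :=
      ⟨Rj, hRjt, hRjne, hRjdet⟩ with hvRj
    set vE : {M : Matrix (Fin n) (Fin n) F // M.BlockTriangular id ∧ M ≠ 0 ∧ M.det = 0} :=
      ⟨Matrix.single e0 en (1 : F), hEt, hEne, hEdet⟩ with hvE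
    have s1 : (orthoGraph F n).edist X vRi ≤ 1 := aux_edist_le_one (by rw [hX]; exact hARi) (by rw [hX]; exact hRiA)
    have s2 : (orthoGraph F n).edist vRi vE ≤ 1 := aux_edist_le_one hRiE hERi
    have s3 : (orthoGraph F n).edist vE vRj ≤ 1 := aux_edist_le_one hERj hRjE
    have s4 : (orthoGraph F n).edist vRj Y ≤ 1 := aux_edist_le_one (by rw [hY]; exact hRjB) (by rw [hY]; exact hBRj)
    calc (orthoGraph F n).edist X Y
        ≤ (orthoGraph F n).edist X vRi + (orthoGraph F n).edist vRi Y :=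
          SimpleGraph.edist_triangle
      _ ≤ (orthoGraph F n).edist X vRi +
            ((orthoGraph F n).edist vRi vE + (orthoGraph F n).edist vE Y) :=
          add_le_add_right SimpleGraph.edist_triangle _
      _ ≤ (orthoGraph F n).edist X vRi +
            ((orthoGraph F n).edist vRi vE +
              ((orthoGraph F n).edist vE vRj + (orthoGraph F n).edist vRj Y)) := by
          exact add_le_add_right (add_le_add_right SimpleGraph.edist_triangle _) _
      _ ≤ 1 + (1 + (1 + 1)) := by
          exact add_le_add s1 (add_le_add s2 (add_le_add s3 s4))
      _ = 4 := by norm_num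
end
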